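/- If an eigenfunction φ_i of T with eigenvalue λ_i factors through the CV map, i.e. φ_i = h̃∘ξ for some h̃ ∈ L²_{μ̃}, then λ_i is an eigenvalue of the effective transfer operator T̃ with eigenfunction h̃: T̃h̃ = λ_i h̃. -/
import Mathlib

open MeasureTheory

/-- If an eigenfunction `φ = h̃∘ξ` of the transfer operator `T` (with
eigenvalue `λ`) factors through the CV map `ξ`, then `λ` is an eigenvalue of the effective
transfer operator `T̃` with eigenfunction `h̃`: `(T̃h̃)(z) = ∫ (T(h̃∘ξ)) dν_z = λ h̃(z)`. -/
theorem factored_eigenfunction_effective {d k : ℕ}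
    (P : (Fin d → ℝ) → Measure (Fin d → ℝ))
    (hP_meas : Measurable P)
    (hP_prob : ∀ x, IsProbabilityMeasure (P x))
    (μ : Measure (Fin d → ℝ)) [IsProbabilityMeasure μ]
    (hμ_inv : μ.bind P = μ)
    (ξ : (Fin d → ℝ) → (Fin k → ℝ)) (hξ : Measurable ξ)
    (ν : (Fin k → ℝ) → Measure (Fin d → ℝ))
    (hν_meas : Measurable ν)
    (hν_prob : ∀ z, IsProbabilityMeasure (ν z))
    (hν_supp : ∀ z, (ν z) {x | ξ x ≠ z} = 0)
    (hdisint : (μ.map ξ).bind ν = μ)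
    (htil : (Fin k → ℝ) → ℝ) (hhtil_meas : Measurable htil)
    (lam : ℝ)
    (hinteg : ∀ x, Integrable (fun y => htil (ξ y)) (P x))
    (heig : ∀ x, (∫ y, htil (ξ y) ∂(P x)) = lam * htil (ξ x)) :
    ∀ z, (∫ x, (∫ y, htil (ξ y) ∂(P x)) ∂(ν z)) = lam * htil z := by
  intro z
  have hae : ∀ᵐ x ∂(ν z), ξ x = z := by
    rw [ae_iff]
    exact hν_supp z
  have hcongr : ∀ᵐ x ∂(ν z), (∫ y, htil (ξ y) ∂(P x)) = lam * htil z := by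
    filter_upwards [hae] with x hx
    rw [heig x, hx]
  rw [integral_congr_ae hcongr, integral_const]
  have := hν_prob z
  simp
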